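/- Let g ≥ 2 and n ≥ 0, and consider integers g₁,…,g_h ≥ 0 and a nonnegative integer k (number of double points) satisfying the Euler characteristic relation 2 − 2g = Σₐ₌₁ʰ (2 − 2gₐ) − 2k. Suppose nonnegative integers c₁,…,c_h satisfy cₐ ≤ gₐ − 1 whenever gₐ ≥ 1 and cₐ ≤ gₐ (i.e. cₐ = 0) whenever gₐ = 0. If m = k + Σₐ cₐ, and ℓ denotes the number of indices a with gₐ = 0, then ℓ ≥ m + 1 − g. -/
import Mathlib


/-- Arithmetic core of Vakil's conjecture: a stratum with `h` components of genera `gₐ`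
and `k` nodes, with codimension contributions `cₐ ≤ gₐ − 1` on positive-genus components
and `cₐ = 0` on genus-0 components, total codimension `m = k + Σ cₐ`, has at least
`m + 1 − g` genus 0 components. -/
theorem stmt_5 (g : ℕ) (hg : 2 ≤ g) (n h k : ℕ)
    (gen : Fin h → ℕ) (c : Fin h → ℕ)
    (heuler : (2 : ℤ) - 2 * g = (∑ a, ((2 : ℤ) - 2 * gen a)) - 2 * k)
    (hc1 : ∀ a, 1 ≤ gen a → c a ≤ gen a - 1)
    (hc0 : ∀ a, gen a = 0 → c a = 0)
    (m : ℕ) (hm : m = k + ∑ a, c a)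
    (ℓ : ℕ) (hℓ : ℓ = (Finset.univ.filter fun a => gen a = 0).card) :
    (m : ℤ) + 1 - g ≤ ℓ := by
  have hsum : (∑ a, ((2 : ℤ) - 2 * gen a)) = 2 * h - 2 * ∑ a, (gen a : ℤ) := by
    rw [Finset.sum_sub_distrib, Finset.sum_const, Finset.card_univ, Fintype.card_fin,
      ← Finset.mul_sum]
    push_cast
    ring
  have hgval : (g : ℤ) = ∑ a, (gen a : ℤ) + k + 1 - h := by
    rw [hsum] at heuler; linarith
  have hkey : ∀ a, (c a : ℤ) ≤ (gen a : ℤ) - 1 + (if gen a = 0 then 1 else 0) := by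
    intro a
    by_cases h0 : gen a = 0
    · simp [h0, hc0 a h0]
    · have h1 : 1 ≤ gen a := Nat.one_le_iff_ne_zero.mpr h0
      have := hc1 a h1
      have := Nat.le_of_eq (Nat.succ_pred_eq_of_pos h1).symm
      simp only [if_neg h0]
      have hcle : (c a : ℤ) ≤ (gen a : ℤ) - 1 := by
        have := hc1 a h1
        omega
      linarith
  have hcsum : (∑ a, (c a : ℤ)) ≤ (∑ a, (gen a : ℤ)) - h + ℓ := by
    calc (∑ a, (c a : ℤ)) ≤ ∑ a, ((gen a : ℤ) - 1 + (if gen a = 0 then 1 else 0)) :=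
          Finset.sum_le_sum fun a _ => hkey a
      _ = (∑ a, (gen a : ℤ)) - h + ℓ := by
          rw [Finset.sum_add_distrib, Finset.sum_sub_distrib, Finset.sum_const,
            Finset.card_univ, Fintype.card_fin, Finset.sum_boole]
          simp [hℓ]
  have hmz : (m : ℤ) = k + ∑ a, (c a : ℤ) := by
    rw [hm]; push_cast; ring
  linarith
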